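/- Let X be a metric space, w a finite path (edge-path of finite length) in a graph X, and 0 < W < |w|. Define c_{w,W}(x,y) = d(x,y) - inf_α(|α| - W·|α|_w), where α ranges over all paths from x to y and |α|_w is the maximal number of non-overlapping copies of w in α. Then for all x, y, z ∈ X: |c_{w,W}(x,y) - c_{w,W}(x,z)| ≤ 2·d(y,z). -/

import Mathlib

section Fujiwara

variable {V G : Type*}

/-- A (nonempty) edge-path in the graph `X`, recorded as its list of vertices. -/
def IsPathList (X : SimpleGraph V) (l : List V) : Prop :=
  l ≠ [] ∧ l.Chain' X.Adj

/-- A path in `X` from `x` to `y`. -/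
def PathFromTo (X : SimpleGraph V) (l : List V) (x y : V) : Prop :=
  IsPathList X l ∧ l.head? = some x ∧ l.getLast? = some y

/-- The length of a path (number of edges). -/
def pathLen (l : List V) : ℝ := (l.length : ℝ) - 1

/-- `c` is a copy of the path `w`, i.e. a `G`-translate of `w`. -/
def IsCopy [Group G] [MulAction G V] (w c : List V) : Prop :=
  ∃ g : G, c = w.map (fun v => g • v)

/-- `CopiesLE w n α` : the path `α` contains at least `n` non-overlapping copies of `w`. -/
def CopiesLE [Group G] [MulAction G V] (w : List V) : ℕ → List V → Prop
  | 0, _ => True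
  | n + 1, α => ∃ pre c suf : List V,
      α = pre ++ c ++ suf ∧ IsCopy (G := G) w c ∧ CopiesLE w n suf

/-- `|α|_w`, the maximal number of non-overlapping copies of `w` in `α`. -/
noncomputable def copyCount (G : Type*) [Group G] [MulAction G V] (w α : List V) : ℕ :=
  sSup {n : ℕ | CopiesLE (G := G) w n α}

/-- Fujiwara's counting function
`c_{w,W}(x,y) = d(x,y) - inf_α (|α| - W·|α|_w)`. -/
noncomputable def fujiC (G : Type*) [Group G] [MulAction G V] (X : SimpleGraph V)
    (d : V → V → ℝ) (w : List V) (W : ℕ) (x y : V) : ℝ :=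
  d x y - sInf {r : ℝ | ∃ α : List V, PathFromTo X α x y ∧
    r = pathLen α - (W : ℝ) * (copyCount G w α : ℝ)}

end Fujiwara


section AuxFuji

variable {V G : Type*} [Group G] [MulAction G V]

lemma copiesLE_append_right (w : List V) : ∀ (n : ℕ) (α γ : List V),
    CopiesLE (G := G) w n α → CopiesLE (G := G) w n (α ++ γ) := by
  intro n
  induction n with
  | zero => intro _ _ _; trivial
  | succ n ih =>
    rintro α γ ⟨pre, c, suf, rfl, hc, hs⟩
    exact ⟨pre, c, suf ++ γ, by simp, hc, ih _ _ hs⟩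

lemma copiesLE_length (w : List V) : ∀ (n : ℕ) (α : List V),
    CopiesLE (G := G) w n α → n * w.length ≤ α.length := by
  intro n
  induction n with
  | zero => simp
  | succ n ih =>
    rintro α ⟨pre, c, suf, rfl, ⟨g, rfl⟩, hs⟩
    have h1 := ih suf hs
    simp only [List.length_append, List.length_map]
    rw [Nat.succ_mul]
    omega

lemma copyCount_bddAbove (w α : List V) (hw : w ≠ []) :
    BddAbove {n : ℕ | CopiesLE (G := G) w n α} := by
  refine ⟨α.length, fun n hn => ?_⟩
  have h1 := copiesLE_length (G := G) w n α hn
  have h2 : 1 ≤ w.length := List.length_pos_iff.2 hw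
  calc n ≤ n * w.length := Nat.le_mul_of_pos_right n (by omega)
    _ ≤ α.length := h1

lemma copyCount_spec (w α : List V) (hw : w ≠ []) :
    CopiesLE (G := G) w (copyCount G w α) α := by
  have h0 : (0 : ℕ) ∈ {n : ℕ | CopiesLE (G := G) w n α} := by
    show CopiesLE (G := G) w 0 α
    trivial
  exact Nat.sSup_mem ⟨0, h0⟩ (copyCount_bddAbove w α hw)

lemma copyCount_le (w α : List V) (hw : w ≠ []) {n : ℕ}
    (h : CopiesLE (G := G) w n α) : n ≤ copyCount G w α :=
  le_csSup (copyCount_bddAbove w α hw) h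

lemma walk_pathFromTo {X : SimpleGraph V} {x y : V} (p : X.Walk x y) :
    PathFromTo X p.support x y := by
  refine ⟨⟨p.support_ne_nil, p.isChain_adj_support⟩, ?_, ?_⟩
  · rw [List.head?_eq_head p.support_ne_nil, p.head_support]
  · rw [List.getLast?_eq_getLast p.support_ne_nil, p.getLast_support]

lemma pathFromTo_reverse {X : SimpleGraph V} {l : List V} {x y : V}
    (h : PathFromTo X l x y) : PathFromTo X l.reverse y x := by
  obtain ⟨⟨hne, hch⟩, hh, hl⟩ := h
  refine ⟨⟨by simpa using hne, ?_⟩, by simpa using hl, by simpa using hh⟩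
  rw [List.Chain', List.isChain_reverse]
  exact hch.imp (fun a b hab => hab.symm)

lemma pathFromTo_trans {X : SimpleGraph V} {α β : List V} {x y z : V}
    (hα : PathFromTo X α x y) (hβ : PathFromTo X β y z) :
    PathFromTo X (α ++ β.tail) x z ∧
      pathLen (α ++ β.tail) = pathLen α + pathLen β := by
  obtain ⟨⟨hαne, hαch⟩, hαh, hαl⟩ := hα
  obtain ⟨⟨hβne, hβch⟩, hβh, hβl⟩ := hβ
  obtain ⟨b, t, rfl⟩ := List.exists_cons_of_ne_nil hβne
  have hb : b = y := by simpa using hβh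
  have hlen : pathLen (α ++ (b :: t).tail) = pathLen α + pathLen (b :: t) := by
    simp only [pathLen, List.tail_cons, List.length_append, List.length_cons]
    push_cast; ring
  rcases t with _ | ⟨c, t'⟩
  · have hz : b = z := by simpa using hβl
    have hyz : y = z := by rw [← hb, hz]
    refine ⟨⟨⟨by simp [hαne], by simpa using hαch⟩, by simpa using hαh, ?_⟩, hlen⟩
    simpa [hyz] using hαl
  · have hadj : X.Adj b c ∧ List.Chain' X.Adj (c :: t') := List.isChain_cons_cons.1 hβch
    rw [List.getLast?_cons_cons] at hβl
    refine ⟨⟨⟨by simp [hαne], ?_⟩, ?_, ?_⟩, hlen⟩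
    · rw [List.tail_cons, List.Chain', List.isChain_append]
      refine ⟨hαch, hadj.2, ?_⟩
      intro u hu v hv
      simp only [Option.mem_def, hαl, List.head?_cons, Option.some.injEq] at hu hv
      subst hu; subst hv
      exact hb ▸ hadj.1
    · rw [List.tail_cons, List.head?_append_of_ne_nil _ hαne]
      exact hαh
    · rw [List.tail_cons, List.getLast?_append_of_ne_nil _ (List.cons_ne_nil c t')]
      exact hβl

end AuxFuji

/-- Fujiwara's Lemma 3.4: `|c_{w,W}(x,y) - c_{w,W}(x,z)| ≤ 2 d(y,z)`. -/
theorem stmt_6 {V G : Type*} [Group G] [MulAction G V] (X : SimpleGraph V)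
    (hconn : X.Connected)
    (hact : ∀ (g : G) (a b : V), X.Adj a b → X.Adj (g • a) (g • b))
    (d : V → V → ℝ)
    (hd : ∀ x y : V,
      d x y = sInf {r : ℝ | ∃ α : List V, PathFromTo X α x y ∧ r = pathLen α})
    (w : List V) (hw : IsPathList X w) (W : ℕ) (hW0 : 0 < W) (hWlt : (W : ℝ) < pathLen w) :
    ∀ x y z : V,
      |fujiC G X d w W x y - fujiC G X d w W x z| ≤ 2 * d y z := by
  intro x y z
  classical
  have hwne : w ≠ [] := hw.1
  set S : V → V → Set ℝ := fun a b =>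
    {r : ℝ | ∃ α : List V, PathFromTo X α a b ∧ r = pathLen α} with hS
  set T : V → V → Set ℝ := fun a b =>
    {r : ℝ | ∃ α : List V, PathFromTo X α a b ∧
      r = pathLen α - (W : ℝ) * (copyCount G w α : ℝ)} with hT
  have hSne : ∀ a b : V, (S a b).Nonempty := by
    intro a b
    obtain ⟨p⟩ := hconn a b
    exact ⟨pathLen p.support, p.support, walk_pathFromTo p, rfl⟩
  have hTne : ∀ a b : V, (T a b).Nonempty := by
    intro a b
    obtain ⟨p⟩ := hconn a b
    exact ⟨_, p.support, walk_pathFromTo p, rfl⟩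
  have hSbdd : ∀ a b : V, ∀ r ∈ S a b, (0 : ℝ) ≤ r := by
    rintro a b r ⟨α, hα, rfl⟩
    have h1 : 1 ≤ α.length := List.length_pos_iff.2 hα.1.1
    have h2 : (1 : ℝ) ≤ (α.length : ℝ) := by exact_mod_cast h1
    simp only [pathLen]; linarith
  have hTbdd : ∀ a b : V, ∀ r ∈ T a b, (-1 : ℝ) ≤ r := by
    rintro a b r ⟨α, hα, rfl⟩
    have hc := copyCount_spec (G := G) w α hwne
    have hlen := copiesLE_length (G := G) w _ α hc
    set n := copyCount G w α with hn
    have h1 : (n : ℝ) * (w.length : ℝ) ≤ (α.length : ℝ) := by exact_mod_cast hlen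
    have h2 : (W : ℝ) < (w.length : ℝ) - 1 := by simpa [pathLen] using hWlt
    have h0 : (0 : ℝ) ≤ (n : ℝ) := Nat.cast_nonneg n
    have h3 : (n : ℝ) * (W : ℝ) ≤ (n : ℝ) * (w.length : ℝ) := by nlinarith
    simp only [pathLen]
    nlinarith
  have hSbb : ∀ a b : V, BddBelow (S a b) := fun a b => ⟨0, fun r hr => hSbdd a b r hr⟩
  have hTbb : ∀ a b : V, BddBelow (T a b) := fun a b => ⟨-1, fun r hr => hTbdd a b r hr⟩
  have hSsymm : ∀ a b : V, S a b = S b a := by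
    have h1 : ∀ a b : V, S a b ⊆ S b a := by
      rintro a b r ⟨α, hα, rfl⟩
      exact ⟨α.reverse, pathFromTo_reverse hα, by simp [pathLen]⟩
    intro a b; exact le_antisymm (h1 a b) (h1 b a)
  have hStri : ∀ a b c : V, sInf (S a c) ≤ sInf (S a b) + sInf (S b c) := by
    intro a b c
    have key : ∀ r ∈ S a b, ∀ s ∈ S b c, sInf (S a c) ≤ r + s := by
      rintro r ⟨α, hα, rfl⟩ s ⟨β, hβ, rfl⟩
      obtain ⟨hpath, hlen⟩ := pathFromTo_trans hα hβ
      exact csInf_le (hSbb a c) ⟨α ++ β.tail, hpath, hlen.symm⟩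
    have step1 : ∀ s ∈ S b c, sInf (S a c) - s ≤ sInf (S a b) := by
      intro s hs
      refine le_csInf (hSne a b) (fun r hr => ?_)
      linarith [key r hr s hs]
    have step2 : sInf (S a c) - sInf (S a b) ≤ sInf (S b c) := by
      refine le_csInf (hSne b c) (fun s hs => ?_)
      linarith [step1 s hs]
    linarith
  have hTtri : ∀ a b c : V, sInf (T a c) ≤ sInf (T a b) + sInf (S b c) := by
    intro a b c
    have key : ∀ r ∈ T a b, ∀ s ∈ S b c, sInf (T a c) ≤ r + s := by
      rintro r ⟨α, hα, rfl⟩ s ⟨β, hβ, rfl⟩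
      obtain ⟨hpath, hlen⟩ := pathFromTo_trans hα hβ
      have hmem : pathLen (α ++ β.tail) -
          (W : ℝ) * (copyCount G w (α ++ β.tail) : ℝ) ∈ T a c :=
        ⟨α ++ β.tail, hpath, rfl⟩
      have hcnt : copyCount G w α ≤ copyCount G w (α ++ β.tail) :=
        copyCount_le (G := G) w (α ++ β.tail) hwne
          (copiesLE_append_right (G := G) w _ α β.tail
            (copyCount_spec (G := G) w α hwne))
      have hcnt' : ((copyCount G w α : ℕ) : ℝ) ≤ (copyCount G w (α ++ β.tail) : ℝ) := by
        exact_mod_cast hcnt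
      have hW' : (0 : ℝ) ≤ (W : ℝ) := Nat.cast_nonneg W
      have := csInf_le (hTbb a c) hmem
      nlinarith [this, hlen]
    have step1 : ∀ s ∈ S b c, sInf (T a c) - s ≤ sInf (T a b) := by
      intro s hs
      refine le_csInf (hTne a b) (fun r hr => ?_)
      linarith [key r hr s hs]
    have step2 : sInf (T a c) - sInf (T a b) ≤ sInf (S b c) := by
      refine le_csInf (hSne b c) (fun s hs => ?_)
      linarith [step1 s hs]
    linarith
  have hd' : ∀ a b : V, d a b = sInf (S a b) := fun a b => hd a b
  have hfc : ∀ a b : V, fujiC G X d w W a b = d a b - sInf (T a b) := fun a b => rfl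
  have h1 : sInf (S x y) ≤ sInf (S x z) + sInf (S y z) := by
    have := hStri x z y
    rwa [hSsymm z y] at this
  have h2 : sInf (S x z) ≤ sInf (S x y) + sInf (S y z) := hStri x y z
  have h3 : sInf (T x y) ≤ sInf (T x z) + sInf (S y z) := by
    have := hTtri x z y
    rwa [hSsymm z y] at this
  have h4 : sInf (T x z) ≤ sInf (T x y) + sInf (S y z) := hTtri x y z
  rw [hfc, hfc, hd' x y, hd' x z, hd' y z, abs_le]
  constructor <;> linarith
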